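/- Let A be a k×r integer matrix, B = {b₁,...,bₙ} a basis of the integral kernel of A, and suppose B has norm N (i.e., the saturation of I_B with respect to x₁⋯x_r admits a pure-binomial generating set in which each generator is a signed sum of at most N monomial multiples of the generators x^{b_i⁺} - x^{b_i⁻}). For u ∈ ℕ^r, form the graph on F(u) = {v ∈ ℕ^r : Av = Au} with an edge between v₁ and v₂ iff v₁ - v₂ = Σ_{i=1}^n a_i b_i for some integers a_i with Σ_i |a_i| ≤ N. Then this graph is connected. -/

import Mathlib

open MvPolynomial

noncomputable def xpow {r : ℕ} (d : Fin r → ℕ) : MvPolynomial (Fin r) ℤ :=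
  ∏ j, X j ^ d j

def posPart {r : ℕ} (b : Fin r → ℤ) : Fin r → ℕ := fun j => (b j).toNat
def negPart {r : ℕ} (b : Fin r → ℤ) : Fin r → ℕ := fun j => (-(b j)).toNat

lemma xpow_add' {r : ℕ} (a c : Fin r → ℕ) : xpow (a + c) = xpow a * xpow c := by
  simp [xpow, pow_add, Finset.prod_mul_distrib]

lemma pos_neg_split {r : ℕ} (c d : Fin r → ℤ) :
    ∃ e : Fin r → ℕ, _root_.posPart c + _root_.posPart d = _root_.posPart (c + d) + e ∧
      _root_.negPart c + _root_.negPart d = _root_.negPart (c + d) + e := by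
  refine ⟨fun j => _root_.posPart c j + _root_.posPart d j - _root_.posPart (c + d) j, ?_, ?_⟩ <;>
    · funext j
      simp only [_root_.posPart, _root_.negPart, Pi.add_apply]
      omega

lemma sat_step {r n : ℕ} (b : Fin n → Fin r → ℤ) :
    ∀ (M : ℕ) (a : Fin n → ℤ), (∑ i, (a i).natAbs) ≤ M →
    ∃ e : Fin r → ℕ, xpow e * (xpow (_root_.posPart (∑ i, a i • b i)) -
        xpow (_root_.negPart (∑ i, a i • b i))) ∈
      Ideal.span (Set.range fun i : Fin n => xpow (_root_.posPart (b i)) - xpow (_root_.negPart (b i))) := by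
  intro M
  induction M with
  | zero =>
    intro a ha
    have hz : (∑ i, a i • b i) = 0 := by
      apply Finset.sum_eq_zero; intro i _
      have := Finset.sum_eq_zero_iff.mp (Nat.le_zero.mp ha) i (Finset.mem_univ i)
      have : a i = 0 := by omega
      rw [this, zero_smul]
    refine ⟨0, ?_⟩
    rw [hz]
    have : _root_.posPart (0 : Fin r → ℤ) = _root_.negPart (0 : Fin r → ℤ) := by
      funext j; simp [_root_.posPart, _root_.negPart]
    rw [this, sub_self, mul_zero]
    exact Ideal.zero_mem _
  | succ M ih =>
    intro a ha
    by_cases hM : (∑ i, (a i).natAbs) ≤ M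
    · exact ih a hM
    · have hex : ∃ i, a i ≠ 0 := by
        by_contra h
        push_neg at h
        simp [h] at hM
      obtain ⟨i, hi⟩ := hex
      have hsgn : ((a i).sign = 1 ∧ 0 < a i) ∨ ((a i).sign = -1 ∧ a i < 0) := by
        rcases lt_trichotomy (a i) 0 with h|h|h
        · exact Or.inr ⟨Int.sign_eq_neg_one_iff_neg.mpr h, h⟩
        · exact absurd h hi
        · exact Or.inl ⟨Int.sign_eq_one_iff_pos.mpr h, h⟩
      set a' : Fin n → ℤ := Function.update a i (a i - (a i).sign) with ha'
      have hsum' : (∑ t, (a' t).natAbs) ≤ M := by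
        have h1 : ∑ t, (a' t).natAbs
            = (a' i).natAbs + ∑ t ∈ Finset.univ.erase i, (a' t).natAbs :=
          (Finset.add_sum_erase _ _ (Finset.mem_univ i)).symm
        have h2 : ∑ t, (a t).natAbs
            = (a i).natAbs + ∑ t ∈ Finset.univ.erase i, (a t).natAbs :=
          (Finset.add_sum_erase _ _ (Finset.mem_univ i)).symm
        have h3 : ∑ t ∈ Finset.univ.erase i, (a' t).natAbs
            = ∑ t ∈ Finset.univ.erase i, (a t).natAbs := by
          apply Finset.sum_congr rfl
          intro t ht
          rw [ha', Function.update_of_ne (Finset.ne_of_mem_erase ht)]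
        have h4 : a' i = a i - (a i).sign := by rw [ha', Function.update_self]
        rcases hsgn with ⟨h,h'⟩|⟨h,h'⟩ <;> (rw [h] at h4; omega)
      set c : Fin r → ℤ := (a i).sign • b i with hc
      set d : Fin r → ℤ := ∑ t, a' t • b t with hd
      have key : (∑ t, a t • b t) = c + d := by
        have h5 : ∀ t, a t • b t = (if t = i then c else 0) + a' t • b t := by
          intro t
          by_cases h : t = i
          · subst h
            rw [if_pos rfl, hc, ha', Function.update_self, ← add_smul]
            congr 1
            ring
          · rw [if_neg h, ha', Function.update_of_ne h, zero_add]
        rw [Finset.sum_congr rfl fun t _ => h5 t, Finset.sum_add_distrib,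
          Finset.sum_ite_eq' Finset.univ i fun _ => c, if_pos (Finset.mem_univ i), ← hd]
      have hcI : xpow (_root_.posPart c) - xpow (_root_.negPart c) ∈
          Ideal.span (Set.range fun i : Fin n => xpow (_root_.posPart (b i)) - xpow (_root_.negPart (b i))) := by
        rcases hsgn with ⟨h,_⟩|⟨h,_⟩
        · have : c = b i := by rw [hc, h, one_smul]
          rw [this]
          exact Ideal.subset_span ⟨i, rfl⟩
        · have hp : _root_.posPart c = _root_.negPart (b i) := by
            funext j; simp [_root_.posPart, _root_.negPart, hc, h]
          have hq : _root_.negPart c = _root_.posPart (b i) := by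
            funext j; simp [_root_.posPart, _root_.negPart, hc, h]
          rw [hp, hq]
          have := neg_mem (Ideal.subset_span (s := Set.range fun i : Fin n => xpow (_root_.posPart (b i)) - xpow (_root_.negPart (b i))) ⟨i, rfl⟩)
          simpa using this
      obtain ⟨e', hI'⟩ := ih a' hsum'
      obtain ⟨e, he1, he2⟩ := pos_neg_split c d
      refine ⟨e' + e, ?_⟩
      rw [key]
      have hcalc : xpow (e' + e) * (xpow (_root_.posPart (c + d)) - xpow (_root_.negPart (c + d)))
          = (xpow (_root_.posPart d) * xpow e') * (xpow (_root_.posPart c) - xpow (_root_.negPart c))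
            + xpow (_root_.negPart c) * (xpow e' * (xpow (_root_.posPart d) - xpow (_root_.negPart d))) := by
        have h1 : xpow (_root_.posPart (c + d) + e) = xpow (_root_.posPart c) * xpow (_root_.posPart d) := by
          rw [← he1, xpow_add']
        have h2 : xpow (_root_.negPart (c + d) + e) = xpow (_root_.negPart c) * xpow (_root_.negPart d) := by
          rw [← he2, xpow_add']
        calc xpow (e' + e) * (xpow (_root_.posPart (c + d)) - xpow (_root_.negPart (c + d)))
            = xpow e' * (xpow (_root_.posPart (c + d) + e) - xpow (_root_.negPart (c + d) + e)) := by
              rw [xpow_add' (_root_.posPart (c+d)) e, xpow_add' (_root_.negPart (c+d)) e, xpow_add']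
              ring
          _ = xpow e' * (xpow (_root_.posPart c) * xpow (_root_.posPart d) - xpow (_root_.negPart c) * xpow (_root_.negPart d)) := by
              rw [h1, h2]
          _ = _ := by ring
      rw [hcalc]
      exact add_mem (Ideal.mul_mem_left _ _ hcI) (Ideal.mul_mem_left _ _ hI')

lemma fiber_mem_sat {k r n : ℕ} (A : Matrix (Fin k) (Fin r) ℤ) (b : Fin n → Fin r → ℤ)
    (hgen : ∀ v : Fin r → ℤ, A.mulVec v = 0 → ∃ a : Fin n → ℤ, v = ∑ i, a i • b i)
    (v w : Fin r → ℕ)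
    (h : A.mulVec (fun j => (v j : ℤ)) = A.mulVec (fun j => (w j : ℤ))) :
    ∃ m : ℕ, 0 < m ∧ (xpow v - xpow w) * (∏ j, X j) ^ m ∈
      Ideal.span (Set.range fun i : Fin n => xpow (_root_.posPart (b i)) - xpow (_root_.negPart (b i))) := by
  set s : Fin r → ℤ := (fun j => (v j : ℤ)) - (fun j => (w j : ℤ)) with hs
  have hker0 : A.mulVec s = 0 := by
    rw [hs, Matrix.mulVec_sub, h, sub_self]
  obtain ⟨a, ha⟩ := hgen s hker0
  obtain ⟨e, hI⟩ := sat_step b (∑ i, (a i).natAbs) a le_rfl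
  rw [← ha] at hI
  set μ : Fin r → ℕ := fun j => min (v j) (w j) with hμ
  have hv : v = μ + _root_.posPart s := by
    funext j; simp only [hμ, Pi.add_apply, _root_.posPart, hs, Pi.sub_apply]; omega
  have hw : w = μ + _root_.negPart s := by
    funext j; simp only [hμ, Pi.add_apply, _root_.negPart, hs, Pi.sub_apply]; omega
  refine ⟨(∑ j, e j) + 1, Nat.succ_pos _, ?_⟩
  have hbig : ∀ j, e j ≤ (∑ j, e j) + 1 := by
    intro j
    exact le_trans (Finset.single_le_sum (f := fun j => e j) (fun _ _ => Nat.zero_le _) (Finset.mem_univ j)) (Nat.le_succ _)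
  set m := (∑ j, e j) + 1 with hm
  have hprod : ((∏ j, X j) ^ m : MvPolynomial (Fin r) ℤ) = xpow (fun _ => m) := by
    simp [xpow, Finset.prod_pow]
  have hsplit : (fun _ => m : Fin r → ℕ) = e + (fun j => m - e j) := by
    funext j
    have := hbig j
    simp only [Pi.add_apply]
    omega
  have hcalc : (xpow v - xpow w) * (∏ j, X j) ^ m
      = (xpow μ * xpow (fun j => m - e j)) *
        (xpow e * (xpow (_root_.posPart s) - xpow (_root_.negPart s))) := by
    rw [hprod, hsplit, xpow_add', hv, hw, xpow_add', xpow_add']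
    ring
  rw [hcalc]
  exact Ideal.mul_mem_left _ _ hI

lemma xpow_zero' {r : ℕ} : xpow (0 : Fin r → ℕ) = 1 := by simp [xpow]

lemma xpow_eq_monomial' {r : ℕ} (d : Fin r → ℕ) :
    xpow d = monomial (Finsupp.equivFunOnFinite.symm d) 1 := by
  rw [monomial_eq, C_1, one_mul, Finsupp.prod_fintype]
  · rfl
  · intro i; exact pow_zero _

lemma coeff_xpow {r : ℕ} (e : (Fin r) →₀ ℕ) (d : Fin r → ℕ) :
    coeff e (xpow d) = if Finsupp.equivFunOnFinite.symm d = e then 1 else 0 := by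
  rw [xpow_eq_monomial', coeff_monomial]

lemma eval_one_xpow {r : ℕ} (d : Fin r → ℕ) : eval (fun _ => (1:ℤ)) (xpow d) = 1 := by
  simp [xpow]

lemma Dj_xpow {r : ℕ} (j : Fin r) (d : Fin r → ℕ) :
    eval (fun _ => (1:ℤ)) (pderiv j (xpow d)) = d j := by
  rw [xpow_eq_monomial', pderiv_monomial, eval_monomial]
  simp [Finsupp.prod]

lemma move_of_decomp {r n N : ℕ} (b : Fin n → Fin r → ℤ) (p q : Fin r → ℕ)
    (ε : Fin N → ℤ) (m : Fin N → Fin r → ℕ) (idx : Fin N → Fin n)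
    (hε : ∀ i, ε i = -1 ∨ ε i = 0 ∨ ε i = 1)
    (heq : xpow p - xpow q = ∑ i, C (ε i) * xpow (m i) *
      (xpow (_root_.posPart (b (idx i))) - xpow (_root_.negPart (b (idx i))))) :
    ∃ a : Fin n → ℤ, (∑ i, |a i|) ≤ (N : ℤ) ∧
      (fun j => (p j : ℤ) - (q j : ℤ)) = ∑ i, a i • b i := by
  have hD : ∀ j : Fin r, (p j : ℤ) - (q j : ℤ) = ∑ i, ε i * b (idx i) j := by
    intro j
    have h1 := congrArg (fun f => eval (fun _ => (1:ℤ)) (pderiv j f)) heq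
    simp only [map_sub, map_sum] at h1
    rw [Dj_xpow, Dj_xpow] at h1
    rw [h1]
    apply Finset.sum_congr rfl
    intro i _
    have hterm : C (ε i) * xpow (m i) *
        (xpow (_root_.posPart (b (idx i))) - xpow (_root_.negPart (b (idx i))))
      = C (ε i) * (xpow (m i + _root_.posPart (b (idx i))) - xpow (m i + _root_.negPart (b (idx i)))) := by
      rw [xpow_add', xpow_add']
      ring
    rw [hterm, pderiv_C_mul, map_sub, map_mul, eval_C, map_sub, Dj_xpow, Dj_xpow]
    have hb : ((m i + _root_.posPart (b (idx i))) j : ℤ) - ((m i + _root_.negPart (b (idx i))) j : ℤ)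
        = b (idx i) j := by
      simp only [Pi.add_apply, _root_.posPart, _root_.negPart]
      push_cast
      omega
    rw [mul_sub, ← mul_sub, hb]
  refine ⟨fun t => ∑ i, if idx i = t then ε i else 0, ?_, ?_⟩
  · calc (∑ t, |∑ i, if idx i = t then ε i else 0|)
        ≤ ∑ t, ∑ i, |if idx i = t then ε i else 0| :=
          Finset.sum_le_sum fun t _ => Finset.abs_sum_le_sum_abs _ _
      _ = ∑ i, ∑ t, if idx i = t then |ε i| else 0 := by
          rw [Finset.sum_comm]
          apply Finset.sum_congr rfl; intro i _
          apply Finset.sum_congr rfl; intro t _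
          rw [apply_ite abs, abs_zero]
      _ = ∑ i, |ε i| := by
          apply Finset.sum_congr rfl; intro i _
          rw [Finset.sum_ite_eq]
          simp
      _ ≤ ∑ i : Fin N, 1 := by
          apply Finset.sum_le_sum
          intro i _
          rcases hε i with h|h|h <;> simp [h]
      _ = (N : ℤ) := by simp
  · funext j
    have := hD j
    rw [this]
    simp only [Finset.sum_apply, Pi.smul_apply, smul_eq_mul, Finset.sum_mul, ite_mul, zero_mul]
    rw [Finset.sum_comm]
    apply Finset.sum_congr rfl
    intro i _
    rw [Finset.sum_ite_eq]
    simp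

lemma list_sum_map_mul {α : Type*} {R : Type*} [CommRing R] (l : List α) (f : α → R) (c : R) :
    (l.map fun e => c * f e).sum = c * (l.map f).sum := by
  induction l with
  | nil => simp
  | cons x xs ih => simp [ih, mul_add]

lemma xpow_single {r : ℕ} (j : Fin r) :
    xpow (fun t => if t = j then 1 else 0) = X (R := ℤ) j := by
  simp only [xpow, pow_ite, pow_one, pow_zero]
  rw [Finset.prod_ite_eq']
  simp

lemma mul_repr {r : ℕ} (P : (Fin r → ℕ) → (Fin r → ℕ) → Prop)
    (h f : MvPolynomial (Fin r) ℤ)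
    (hf : ∃ L : List (ℤ × (Fin r → ℕ) × (Fin r → ℕ) × (Fin r → ℕ)),
      (∀ e ∈ L, P e.2.2.1 e.2.2.2) ∧
      f = (L.map fun e => C e.1 * xpow e.2.1 * (xpow e.2.2.1 - xpow e.2.2.2)).sum) :
    ∃ L : List (ℤ × (Fin r → ℕ) × (Fin r → ℕ) × (Fin r → ℕ)),
      (∀ e ∈ L, P e.2.2.1 e.2.2.2) ∧
      h * f = (L.map fun e => C e.1 * xpow e.2.1 * (xpow e.2.2.1 - xpow e.2.2.2)).sum := by
  induction h using MvPolynomial.induction_on with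
  | C a =>
    obtain ⟨L, hL, hsum⟩ := hf
    refine ⟨L.map fun e => (a * e.1, e.2), ?_, ?_⟩
    · intro e he
      obtain ⟨e', he', rfl⟩ := List.mem_map.mp he
      exact hL e' he'
    · rw [hsum, List.map_map]
      have : ((fun e : ℤ × (Fin r → ℕ) × (Fin r → ℕ) × (Fin r → ℕ) =>
            C e.1 * xpow e.2.1 * (xpow e.2.2.1 - xpow e.2.2.2)) ∘
          (fun e : ℤ × (Fin r → ℕ) × (Fin r → ℕ) × (Fin r → ℕ) => ((a * e.1, e.2) : ℤ × (Fin r → ℕ) × (Fin r → ℕ) × (Fin r → ℕ))))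
          = fun e : ℤ × (Fin r → ℕ) × (Fin r → ℕ) × (Fin r → ℕ) =>
            C a * (C e.1 * xpow e.2.1 * (xpow e.2.2.1 - xpow e.2.2.2)) := by
        funext e
        simp only [Function.comp_apply, C_mul]
        ring
      rw [this, list_sum_map_mul]
  | add g₁ g₂ ih₁ ih₂ =>
    obtain ⟨L₁, hL₁, hs₁⟩ := ih₁
    obtain ⟨L₂, hL₂, hs₂⟩ := ih₂
    refine ⟨L₁ ++ L₂, ?_, ?_⟩
    · intro e he
      rcases List.mem_append.mp he with h|h
      · exact hL₁ e h
      · exact hL₂ e h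
    · rw [add_mul, hs₁, hs₂, List.map_append, List.sum_append]
  | mul_X g j ih =>
    obtain ⟨L, hL, hsum⟩ := ih
    refine ⟨L.map fun e => (e.1, e.2.1 + fun t => if t = j then 1 else 0, e.2.2), ?_, ?_⟩
    · intro e he
      obtain ⟨e', he', rfl⟩ := List.mem_map.mp he
      exact hL e' he'
    · have hgf : g * X j * f = X j * (g * f) := by ring
      rw [hgf, hsum, List.map_map]
      have : ((fun e : ℤ × (Fin r → ℕ) × (Fin r → ℕ) × (Fin r → ℕ) =>
            C e.1 * xpow e.2.1 * (xpow e.2.2.1 - xpow e.2.2.2)) ∘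
          (fun e : ℤ × (Fin r → ℕ) × (Fin r → ℕ) × (Fin r → ℕ) =>
            ((e.1, e.2.1 + fun t => if t = j then 1 else 0, e.2.2) : ℤ × (Fin r → ℕ) × (Fin r → ℕ) × (Fin r → ℕ))))
          = fun e : ℤ × (Fin r → ℕ) × (Fin r → ℕ) × (Fin r → ℕ) =>
            X j * (C e.1 * xpow e.2.1 * (xpow e.2.2.1 - xpow e.2.2.2)) := by
        funext e
        simp only [Function.comp_apply]
        rw [xpow_add', xpow_single]
        ring
      rw [this, list_sum_map_mul]

lemma span_repr {r : ℕ} (G : Set (MvPolynomial (Fin r) ℤ))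
    (P : (Fin r → ℕ) → (Fin r → ℕ) → Prop)
    (hG : ∀ g ∈ G, ∃ p q : Fin r → ℕ, g = xpow p - xpow q ∧ P p q)
    (f : MvPolynomial (Fin r) ℤ) (hf : f ∈ Ideal.span G) :
    ∃ L : List (ℤ × (Fin r → ℕ) × (Fin r → ℕ) × (Fin r → ℕ)),
      (∀ e ∈ L, P e.2.2.1 e.2.2.2) ∧
      f = (L.map fun e => C e.1 * xpow e.2.1 * (xpow e.2.2.1 - xpow e.2.2.2)).sum := by
  refine Submodule.span_induction ?_ ?_ ?_ ?_ hf
  · intro g hg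
    obtain ⟨p, q, hpq, hP⟩ := hG g hg
    refine ⟨[(1, 0, p, q)], ?_, ?_⟩
    · intro e he
      simp only [List.mem_singleton] at he
      subst he
      exact hP
    · simp [hpq, xpow_zero']
  · exact ⟨[], by simp, by simp⟩
  · intro x y _ _ hx hy
    obtain ⟨L₁, hL₁, hs₁⟩ := hx
    obtain ⟨L₂, hL₂, hs₂⟩ := hy
    refine ⟨L₁ ++ L₂, ?_, ?_⟩
    · intro e he
      rcases List.mem_append.mp he with h|h
      · exact hL₁ e h
      · exact hL₂ e h
    · rw [hs₁, hs₂, List.map_append, List.sum_append]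
  · intro a x _ hx
    have := mul_repr P a x hx
    simpa [smul_eq_mul] using this

lemma coeff_list_sum {r : ℕ} (d : (Fin r) →₀ ℕ) (l : List (MvPolynomial (Fin r) ℤ)) :
    coeff d l.sum = (l.map (coeff d)).sum := by
  induction l with
  | nil => simp
  | cons x xs ihl => simp [MvPolynomial.coeff_add, ihl]

lemma list_exists_pos (l : List ℤ) (h : 0 < l.sum) : ∃ x ∈ l, 0 < x := by
  induction l with
  | nil => simp at h
  | cons x xs ih =>
    by_cases hx : 0 < x
    · exact ⟨x, List.mem_cons_self, hx⟩
    · have : 0 < xs.sum := by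
        simp only [List.sum_cons] at h
        omega
      obtain ⟨y, hy, hy'⟩ := ih this
      exact ⟨y, List.mem_cons_of_mem x hy, hy'⟩

lemma list_connect {r : ℕ}
    (P : (Fin r → ℕ) → (Fin r → ℕ) → Prop)
    (F : Set (Fin r → ℕ))
    (Adj : (Fin r → ℕ) → (Fin r → ℕ) → Prop)
    (hsymm : ∀ p q, P p q → P q p)
    (hF : ∀ v m p q, v ∈ F → P p q → v = m + p → m + q ∈ F)
    (hAdj : ∀ v m p q, v ∈ F → P p q → v = m + p → v ≠ m + q → Adj v (m + q)) :
    ∀ (T : ℕ) (L : List (ℤ × (Fin r → ℕ) × (Fin r → ℕ) × (Fin r → ℕ))),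
      (L.map fun e => e.1.natAbs).sum = T →
      (∀ e ∈ L, P e.2.2.1 e.2.2.2) →
      ∀ v, v ∈ F → ∀ w,
      xpow v - xpow w = (L.map fun e => C e.1 * xpow e.2.1 * (xpow e.2.2.1 - xpow e.2.2.2)).sum →
      Relation.ReflTransGen Adj v w := by
  intro T
  induction T using Nat.strong_induction_on with
  | _ T ih =>
  intro L hT hP v hvF w heq
  by_cases hvw : v = w
  · subst hvw; exact Relation.ReflTransGen.refl
  -- coefficient of the monomial v in both sides
  have hcoeff : (L.map fun e => e.1 *
      ((if e.2.1 + e.2.2.1 = v then (1:ℤ) else 0) -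
       (if e.2.1 + e.2.2.2 = v then (1:ℤ) else 0))).sum = 1 := by
    have h0 := congrArg (coeff (Finsupp.equivFunOnFinite.symm v)) heq
    rw [coeff_list_sum, List.map_map] at h0
    have hL : coeff (Finsupp.equivFunOnFinite.symm v) (xpow v - xpow w) = 1 := by
      rw [MvPolynomial.coeff_sub, coeff_xpow, coeff_xpow, if_pos rfl,
        if_neg (fun hc => hvw (Finsupp.equivFunOnFinite.symm.injective hc).symm)]
      ring
    rw [hL] at h0
    have hmaps : List.map (coeff (Finsupp.equivFunOnFinite.symm v) ∘
          fun e : ℤ × (Fin r → ℕ) × (Fin r → ℕ) × (Fin r → ℕ) =>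
            C e.1 * xpow e.2.1 * (xpow e.2.2.1 - xpow e.2.2.2)) L
        = List.map (fun e : ℤ × (Fin r → ℕ) × (Fin r → ℕ) × (Fin r → ℕ) => e.1 *
            ((if e.2.1 + e.2.2.1 = v then (1:ℤ) else 0) -
             (if e.2.1 + e.2.2.2 = v then (1:ℤ) else 0))) L := by
      apply List.map_congr_left
      intro e _
      simp only [Function.comp_apply]
      have : C e.1 * xpow e.2.1 * (xpow e.2.2.1 - xpow e.2.2.2)
          = C e.1 * (xpow (e.2.1 + e.2.2.1) - xpow (e.2.1 + e.2.2.2)) := by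
        rw [xpow_add', xpow_add']; ring
      rw [this, coeff_C_mul, MvPolynomial.coeff_sub, coeff_xpow, coeff_xpow]
      congr 2
      · by_cases h : e.2.1 + e.2.2.1 = v
        · rw [if_pos h, if_pos (by rw [h])]
        · rw [if_neg h, if_neg (fun hc => h (Finsupp.equivFunOnFinite.symm.injective hc))]
      · by_cases h : e.2.1 + e.2.2.2 = v
        · rw [if_pos h, if_pos (by rw [h])]
        · rw [if_neg h, if_neg (fun hc => h (Finsupp.equivFunOnFinite.symm.injective hc))]
    rw [hmaps] at h0
    exact h0.symm
  obtain ⟨x, hxmem, hxpos⟩ := list_exists_pos _ (by rw [hcoeff]; norm_num)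
  obtain ⟨e, heL, rfl⟩ := List.mem_map.mp hxmem
  obtain ⟨c, m, p, q⟩ := e
  simp only at hxpos
  have hPe : P p q := hP (c, m, p, q) heL
  obtain ⟨L₁, L₂, rfl⟩ := List.append_of_mem heL
  by_cases h1 : m + p = v <;> by_cases h2 : m + q = v
  · rw [if_pos h1, if_pos h2] at hxpos; simp at hxpos
  · -- main case 1 : v = m + p, step to m + q, c > 0
    rw [if_pos h1, if_neg h2] at hxpos
    have hc : 0 < c := by simpa using hxpos
    have hedge : Adj v (m + q) := hAdj v m p q hvF hPe h1.symm (fun hc' => h2 hc'.symm)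
    have hmqF : m + q ∈ F := hF v m p q hvF hPe h1.symm
    set L' : List (ℤ × (Fin r → ℕ) × (Fin r → ℕ) × (Fin r → ℕ)) :=
      L₁ ++ (c - 1, m, p, q) :: L₂ with hL'
    have hT' : (L'.map fun e => e.1.natAbs).sum < T := by
      rw [← hT, hL']
      simp only [List.map_append, List.sum_append, List.map_cons, List.sum_cons]
      omega
    have hP' : ∀ e ∈ L', P e.2.2.1 e.2.2.2 := by
      intro e he
      rw [hL'] at he
      rcases List.mem_append.mp he with h|h
      · exact hP e (List.mem_append.mpr (Or.inl h))
      · rcases List.mem_cons.mp h with h|h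
        · subst h; exact hPe
        · exact hP e (List.mem_append.mpr (Or.inr (List.mem_cons_of_mem _ h)))
    have heq' : xpow (m + q) - xpow w =
        (L'.map fun e => C e.1 * xpow e.2.1 * (xpow e.2.2.1 - xpow e.2.2.2)).sum := by
      rw [← h1] at heq
      simp only [hL', List.map_append, List.sum_append, List.map_cons, List.sum_cons] at heq ⊢
      simp only [xpow_add', C_sub, C_1] at heq ⊢
      linear_combination heq
    exact Relation.ReflTransGen.head hedge
      (ih _ hT' L' rfl hP' (m + q) hmqF w heq')
  · -- main case 2 : v = m + q, step to m + p, c < 0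
    rw [if_neg h1, if_pos h2] at hxpos
    have hc : c < 0 := by
      have : c * (0 - 1) = -c := by ring
      omega
    have hedge : Adj v (m + p) := hAdj v m q p hvF (hsymm _ _ hPe) h2.symm (fun hc' => h1 hc'.symm)
    have hmpF : m + p ∈ F := hF v m q p hvF (hsymm _ _ hPe) h2.symm
    set L' : List (ℤ × (Fin r → ℕ) × (Fin r → ℕ) × (Fin r → ℕ)) :=
      L₁ ++ (c + 1, m, p, q) :: L₂ with hL'
    have hT' : (L'.map fun e => e.1.natAbs).sum < T := by
      rw [← hT, hL']
      simp only [List.map_append, List.sum_append, List.map_cons, List.sum_cons]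
      omega
    have hP' : ∀ e ∈ L', P e.2.2.1 e.2.2.2 := by
      intro e he
      rw [hL'] at he
      rcases List.mem_append.mp he with h|h
      · exact hP e (List.mem_append.mpr (Or.inl h))
      · rcases List.mem_cons.mp h with h|h
        · subst h; exact hPe
        · exact hP e (List.mem_append.mpr (Or.inr (List.mem_cons_of_mem _ h)))
    have heq' : xpow (m + p) - xpow w =
        (L'.map fun e => C e.1 * xpow e.2.1 * (xpow e.2.2.1 - xpow e.2.2.2)).sum := by
      rw [← h2] at heq
      simp only [hL', List.map_append, List.sum_append, List.map_cons, List.sum_cons] at heq ⊢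
      simp only [xpow_add', C_add, C_1] at heq ⊢
      linear_combination heq
    exact Relation.ReflTransGen.head hedge
      (ih _ hT' L' rfl hP' (m + p) hmpF w heq')
  · rw [if_neg h1, if_neg h2] at hxpos; simp at hxpos

/-- If `B = {b₁,…,bₙ}` is a basis of the integral kernel of `A` and `B` has norm
`N` (the saturation of `I_B` with respect to `x₁⋯x_r` is generated by pure
difference binomials each expressible as a signed sum of `N` monomial multiples of
the generators), then for every `u ∈ ℕ^r` the graph on the fibre `F(u)`, with an
edge between `v₁, v₂` iff `v₁ - v₂ = Σ aᵢ bᵢ` with `Σ |aᵢ| ≤ N`, is connected. -/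
theorem stmt19 (k r n N : ℕ) (hN : 1 ≤ N) (A : Matrix (Fin k) (Fin r) ℤ)
    (b : Fin n → (Fin r → ℤ))
    (hker : ∀ i, A.mulVec (b i) = 0)
    (hgen : ∀ v : Fin r → ℤ, A.mulVec v = 0 → ∃ a : Fin n → ℤ, v = ∑ i, a i • b i)
    (hind : ∀ a : Fin n → ℤ, ∑ i, a i • b i = 0 → a = 0)
    (hnorm : ∃ G : Set (MvPolynomial (Fin r) ℤ),
      {x : MvPolynomial (Fin r) ℤ | ∃ m : ℕ, 0 < m ∧ x * (∏ j, X j) ^ m ∈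
          Ideal.span (Set.range fun i : Fin n =>
            xpow (posPart (b i)) - xpow (negPart (b i)))}
        = (Ideal.span G : Set (MvPolynomial (Fin r) ℤ)) ∧
      ∀ g ∈ G, (∃ p q : Fin r → ℕ, g = xpow p - xpow q) ∧
        ∃ (ε : Fin N → ℤ) (m : Fin N → (Fin r → ℕ)) (idx : Fin N → Fin n),
          (∀ i, ε i = -1 ∨ ε i = 0 ∨ ε i = 1) ∧
          g = ∑ i, C (ε i) * xpow (m i) *
            (xpow (posPart (b (idx i))) - xpow (negPart (b (idx i))))) :
    ∀ u : Fin r → ℕ,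
      let F : Set (Fin r → ℕ) :=
        {v | A.mulVec (fun i => (v i : ℤ)) = A.mulVec (fun i => (u i : ℤ))}
      let Adj : (Fin r → ℕ) → (Fin r → ℕ) → Prop := fun v w =>
        v ∈ F ∧ w ∈ F ∧ v ≠ w ∧
          ∃ a : Fin n → ℤ, (∑ i, |a i|) ≤ (N : ℤ) ∧
            (fun j => (v j : ℤ) - (w j : ℤ)) = ∑ i, a i • b i
      ∀ v ∈ F, ∀ w ∈ F, Relation.ReflTransGen Adj v w := by
  intro u F Adj v hv w hw
  obtain ⟨G, hGspan, hGprop⟩ := hnorm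
  have hv' : A.mulVec (fun j => (v j : ℤ)) = A.mulVec (fun j => (u j : ℤ)) := hv
  have hw' : A.mulVec (fun j => (w j : ℤ)) = A.mulVec (fun j => (u j : ℤ)) := hw
  have hvw : A.mulVec (fun j => (v j : ℤ)) = A.mulVec (fun j => (w j : ℤ)) :=
    hv'.trans hw'.symm
  obtain ⟨M, hM, hmem⟩ := fiber_mem_sat A b hgen v w hvw
  have hsat : xpow v - xpow w ∈ (Ideal.span G : Set (MvPolynomial (Fin r) ℤ)) := by
    rw [← hGspan]
    exact ⟨M, hM, hmem⟩
  set P : (Fin r → ℕ) → (Fin r → ℕ) → Prop := fun p q =>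
    ∃ a : Fin n → ℤ, (∑ i, |a i|) ≤ (N : ℤ) ∧
      (fun j => (p j : ℤ) - (q j : ℤ)) = ∑ i, a i • b i with hPdef
  have hG : ∀ g ∈ G, ∃ p q : Fin r → ℕ, g = xpow p - xpow q ∧ P p q := by
    intro g hg
    obtain ⟨⟨p, q, hpq⟩, ε, m, idx, hε, hdec⟩ := hGprop g hg
    exact ⟨p, q, hpq, move_of_decomp b p q ε m idx hε (by rw [← hpq]; exact hdec)⟩
  obtain ⟨L, hL, hsum⟩ := span_repr G P hG _ hsat
  -- zero-mulVec for moves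
  have hz : ∀ a : Fin n → ℤ, A.mulVec (∑ i, a i • b i) = 0 := by
    intro a
    rw [show A.mulVec (∑ i, a i • b i) = A.mulVecLin (∑ i, a i • b i) from rfl, map_sum]
    apply Finset.sum_eq_zero
    intro i _
    rw [map_smul]
    have : A.mulVecLin (b i) = 0 := hker i
    rw [this, smul_zero]
  have hsymm : ∀ p q, P p q → P q p := by
    intro p q ⟨a, ha1, ha2⟩
    refine ⟨-a, by simpa [abs_neg] using ha1, ?_⟩
    have h1 : (fun j => (q j : ℤ) - (p j : ℤ)) = -(fun j => (p j : ℤ) - (q j : ℤ)) := by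
      funext j; simp
    rw [h1, ha2, ← Finset.sum_neg_distrib]
    apply Finset.sum_congr rfl
    intro i _
    simp [neg_smul]
  have hF : ∀ v' m p q, v' ∈ F → P p q → v' = m + p → m + q ∈ F := by
    intro v' m p q hv'F ⟨a, ha1, ha2⟩ hvm
    have key : (fun j => (((m + q) j : ℕ) : ℤ)) =
        (fun j => ((v' j : ℕ) : ℤ)) - (∑ i, a i • b i) := by
      funext j
      have h := congrFun ha2 j
      simp only [Pi.sub_apply, ← h, hvm, Pi.add_apply]
      push_cast
      ring
    show A.mulVec (fun j => (((m + q) j : ℕ) : ℤ)) = A.mulVec (fun j => ((u j : ℕ) : ℤ))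
    rw [key, Matrix.mulVec_sub, hz a, sub_zero]
    exact hv'F
  have hAdj : ∀ v' m p q, v' ∈ F → P p q → v' = m + p → v' ≠ m + q → Adj v' (m + q) := by
    intro v' m p q hv'F hPpq hvm hne
    refine ⟨hv'F, hF v' m p q hv'F hPpq hvm, hne, ?_⟩
    obtain ⟨a, ha1, ha2⟩ := hPpq
    refine ⟨a, ha1, ?_⟩
    funext j
    have h := congrFun ha2 j
    simp only [hvm, Pi.add_apply]
    push_cast
    push_cast at h
    linarith [h]
  exact list_connect P F Adj hsymm hF hAdj _ L rfl hL v hv w hsum
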